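/- Let Φ be an m×N matrix with unit-norm columns, I ⊆ [N] with |I| = k, δ ∈ (0,1), ε ∈ (0,1). Suppose ‖(Φ_IᵀΦ_I)^{-1}‖ ≤ 1/(1-δ) and ‖Φ_Iᵀφ_i‖₂ ≤ (1-δ)/√(8 log(2N/ε)) for all i ∈ I^c. Let σ ∈ {±1}^I be a vector of i.i.d. uniform signs, and set v = ΦᵀΦ_I(Φ_IᵀΦ_I)^{-1}σ. Then v_I = σ, v lies in the row space of Φ, and P(‖v_{I^c}‖_∞ > 1/2) ≤ ε. -/

import Mathlib

open Matrix
open scoped Classical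

lemma mgf_bound {ι : Type*} [Fintype ι] [DecidableEq ι] (s : ι → ℝ) (t : ℝ) :
    ∑ b : ι → Bool, Real.exp (t * ∑ i, s i * (if b i then (1:ℝ) else -1))
      ≤ 2 ^ (Fintype.card ι) * Real.exp (t ^ 2 * (∑ i, s i ^ 2) / 2) := by
  have h1 : ∀ b : ι → Bool, Real.exp (t * ∑ i, s i * (if b i then (1:ℝ) else -1))
      = ∏ i, Real.exp (t * (s i * (if b i then (1:ℝ) else -1))) := by
    intro b
    rw [Finset.mul_sum, Real.exp_sum]
  simp_rw [h1]
  have h2 := Fintype.prod_sum (fun (i : ι) (c : Bool) =>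
    Real.exp (t * (s i * (if c then (1:ℝ) else -1))))
  rw [← h2]
  have h3 : ∀ i : ι, ∑ c : Bool, Real.exp (t * (s i * (if c then (1:ℝ) else -1)))
      ≤ 2 * Real.exp ((t * s i) ^ 2 / 2) := by
    intro i
    have hc := Real.cosh_le_exp_half_sq (t * s i)
    rw [Real.cosh_eq] at hc
    have h4 : Real.exp (t * s i) + Real.exp (-(t * s i)) ≤ 2 * Real.exp ((t * s i) ^ 2 / 2) := by
      nlinarith [hc]
    have h5 : ∑ c : Bool, Real.exp (t * (s i * (if c then (1:ℝ) else -1)))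
        = Real.exp (t * s i) + Real.exp (-(t * s i)) := by
      rw [Fintype.sum_bool]
      norm_num
    rw [h5]; exact h4
  calc ∏ i, ∑ c : Bool, Real.exp (t * (s i * (if c then (1:ℝ) else -1)))
      ≤ ∏ i, 2 * Real.exp ((t * s i) ^ 2 / 2) := by
        apply Finset.prod_le_prod
        · intro i _; positivity
        · intro i _; exact h3 i
    _ = 2 ^ (Fintype.card ι) * Real.exp (t ^ 2 * (∑ i, s i ^ 2) / 2) := by
        rw [Finset.prod_mul_distrib, Finset.prod_const, ← Real.exp_sum,
          show (∑ x : ι, (t * s x) ^ 2 / 2) = (t ^ 2 * ∑ i : ι, s i ^ 2) / 2 from by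
            rw [Finset.mul_sum, Finset.sum_div]
            exact Finset.sum_congr rfl fun i _ => by ring,
          Finset.card_univ]

lemma count_bound {ι : Type*} [Fintype ι] [DecidableEq ι] (s : ι → ℝ) (a : ℝ) (ha : 0 < a)
    (hS : 0 < ∑ i, s i ^ 2) :
    ((Finset.univ.filter (fun b : ι → Bool =>
        a < ∑ i, s i * (if b i then (1:ℝ) else -1))).card : ℝ)
      ≤ 2 ^ (Fintype.card ι) * Real.exp (-(a ^ 2) / (2 * ∑ i, s i ^ 2)) := by
  set S := ∑ i, s i ^ 2 with hSdef
  set t := a / S with htdef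
  have ht : 0 < t := div_pos ha hS
  set F := Finset.univ.filter (fun b : ι → Bool =>
    a < ∑ i, s i * (if b i then (1:ℝ) else -1)) with hF
  have key : (F.card : ℝ) * Real.exp (t * a)
      ≤ 2 ^ (Fintype.card ι) * Real.exp (t ^ 2 * S / 2) := by
    calc (F.card : ℝ) * Real.exp (t * a) = ∑ _b ∈ F, Real.exp (t * a) := by
          rw [Finset.sum_const, nsmul_eq_mul]
      _ ≤ ∑ b ∈ F, Real.exp (t * ∑ i, s i * (if b i then (1:ℝ) else -1)) := by
          apply Finset.sum_le_sum
          intro b hb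
          have hb' := (Finset.mem_filter.mp hb).2
          exact Real.exp_le_exp.mpr (by nlinarith)
      _ ≤ ∑ b : ι → Bool, Real.exp (t * ∑ i, s i * (if b i then (1:ℝ) else -1)) :=
          Finset.sum_le_sum_of_subset_of_nonneg (Finset.filter_subset _ _)
            (fun b _ _ => (Real.exp_pos _).le)
      _ ≤ _ := mgf_bound s t
  have hexp : (0:ℝ) < Real.exp (t * a) := Real.exp_pos _
  have hSne : S ≠ 0 := ne_of_gt hS
  rw [show -(a ^ 2) / (2 * S) = t ^ 2 * S / 2 - t * a by
    rw [htdef]; field_simp; ring]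
  rw [Real.exp_sub]
  calc (F.card : ℝ) = (F.card : ℝ) * Real.exp (t * a) / Real.exp (t * a) := by
        field_simp
    _ ≤ 2 ^ (Fintype.card ι) * Real.exp (t ^ 2 * S / 2) / Real.exp (t * a) :=
        (div_le_div_iff_of_pos_right hexp).mpr key
    _ = 2 ^ (Fintype.card ι) * (Real.exp (t ^ 2 * S / 2) / Real.exp (t * a)) := by ring

lemma count_abs_bound {ι : Type*} [Fintype ι] [DecidableEq ι] (s : ι → ℝ) (L : ℝ) (hL : 0 < L)
    (hs : ∑ i, s i ^ 2 ≤ 1 / (8 * L)) :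
    ((Finset.univ.filter (fun b : ι → Bool =>
        1/2 < |∑ i, s i * (if b i then (1:ℝ) else -1)|)).card : ℝ)
      ≤ 2 * 2 ^ (Fintype.card ι) * Real.exp (-L) := by
  rcases eq_or_lt_of_le (Finset.sum_nonneg (fun i _ => sq_nonneg (s i))) with hS | hS
  · -- S = 0 : all s i = 0
    have hz : ∀ i ∈ Finset.univ, s i ^ 2 = 0 := by
      intro i hi
      exact (Finset.sum_eq_zero_iff_of_nonneg (fun i _ => sq_nonneg (s i))).mp hS.symm i hi
    have : ∀ b : ι → Bool, (∑ i, s i * (if b i then (1:ℝ) else -1)) = 0 := by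
      intro b
      apply Finset.sum_eq_zero
      intro i hi
      have : s i = 0 := by have := hz i hi; nlinarith [this]
      simp [this]
    have : (Finset.univ.filter (fun b : ι → Bool =>
        1/2 < |∑ i, s i * (if b i then (1:ℝ) else -1)|)) = ∅ := by
      apply Finset.filter_eq_empty_iff.mpr
      intro b _
      rw [this b]
      norm_num
    rw [this]
    simp
    positivity
  · -- S > 0
    set S := ∑ i, s i ^ 2 with hSdef
    have ha : (0:ℝ) < 1/2 := by norm_num
    have hsub : (Finset.univ.filter (fun b : ι → Bool =>
        1/2 < |∑ i, s i * (if b i then (1:ℝ) else -1)|)) ⊆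
        (Finset.univ.filter (fun b : ι → Bool =>
          1/2 < ∑ i, s i * (if b i then (1:ℝ) else -1))) ∪
        (Finset.univ.filter (fun b : ι → Bool =>
          1/2 < ∑ i, (-s i) * (if b i then (1:ℝ) else -1))) := by
      intro b hb
      have hb' := (Finset.mem_filter.mp hb).2
      rcases lt_abs.mp hb' with h | h
      · exact Finset.mem_union_left _ (Finset.mem_filter.mpr ⟨Finset.mem_univ _, h⟩)
      · refine Finset.mem_union_right _ (Finset.mem_filter.mpr ⟨Finset.mem_univ _, ?_⟩)
        have he : ∑ i, (-s i) * (if b i then (1:ℝ) else -1)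
            = -∑ i, s i * (if b i then (1:ℝ) else -1) := by
          rw [← Finset.sum_neg_distrib]
          exact Finset.sum_congr rfl fun i _ => by ring
        rw [he]
        exact h
    have hS' : 0 < ∑ i, (-s i) ^ 2 := by simpa [neg_pow] using hS
    have c1 := count_bound s (1/2) ha hS
    have c2 := count_bound (fun i => -s i) (1/2) ha hS'
    have hcard := Finset.card_le_card hsub
    have hcard2 := Finset.card_union_le
      (Finset.univ.filter (fun b : ι → Bool =>
          1/2 < ∑ i, s i * (if b i then (1:ℝ) else -1)))
      (Finset.univ.filter (fun b : ι → Bool =>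
          1/2 < ∑ i, (-s i) * (if b i then (1:ℝ) else -1)))
    have hSeq : ∑ i, (-s i) ^ 2 = S := by simp [neg_pow, hSdef]
    rw [hSeq] at c2
    have hexp : Real.exp (-(1/2:ℝ) ^ 2 / (2 * S)) ≤ Real.exp (-L) := by
      apply Real.exp_le_exp.mpr
      rw [neg_div, neg_le_neg_iff]
      rw [le_div_iff₀ (by positivity)]
      have h8 : 0 < 8 * L := by positivity
      have : L * (2 * S) ≤ L * (2 * (1 / (8 * L))) := by
        apply mul_le_mul_of_nonneg_left _ hL.le
        linarith
      calc L * (2 * S) ≤ L * (2 * (1 / (8 * L))) := this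
        _ = 1/4 := by field_simp; ring
        _ = (1/2:ℝ)^2 := by norm_num
    calc ((Finset.univ.filter (fun b : ι → Bool =>
        1/2 < |∑ i, s i * (if b i then (1:ℝ) else -1)|)).card : ℝ)
        ≤ ((Finset.univ.filter (fun b : ι → Bool =>
            1/2 < ∑ i, s i * (if b i then (1:ℝ) else -1))).card : ℝ) +
          ((Finset.univ.filter (fun b : ι → Bool =>
            1/2 < ∑ i, (-s i) * (if b i then (1:ℝ) else -1))).card : ℝ) := by
          exact_mod_cast le_trans (Nat.cast_le.mpr hcard) (Nat.cast_le.mpr hcard2)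
      _ ≤ 2 ^ (Fintype.card ι) * Real.exp (-(1/2:ℝ) ^ 2 / (2 * S)) +
          2 ^ (Fintype.card ι) * Real.exp (-(1/2:ℝ) ^ 2 / (2 * S)) := add_le_add c1 c2
      _ = 2 * (2 ^ (Fintype.card ι) * Real.exp (-(1/2:ℝ) ^ 2 / (2 * S))) := by ring
      _ ≤ 2 * (2 ^ (Fintype.card ι) * Real.exp (-L)) := by
          apply mul_le_mul_of_nonneg_left _ (by norm_num)
          exact mul_le_mul_of_nonneg_left hexp (by positivity)
      _ = 2 * 2 ^ (Fintype.card ι) * Real.exp (-L) := by ring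

/-- With `‖(Φ_IᵀΦ_I)⁻¹‖ ≤ 1/(1-δ)` and `‖Φ_Iᵀφ_i‖₂ ≤ (1-δ)/√(8 log(2N/ε))` for
`i ∉ I`, the vector `v = ΦᵀΦ_I(Φ_IᵀΦ_I)⁻¹σ` built from i.i.d. uniform signs `σ`
satisfies `v_I = σ`, lies in the row space of `Φ`, and
`P(‖v_{I^c}‖_∞ > 1/2) ≤ ε` (probability = counting over sign patterns). -/
theorem stmt_16 (m N k : ℕ) (δ ε : ℝ) (hδ0 : 0 < δ) (hδ1 : δ < 1)
    (hε0 : 0 < ε) (hε1 : ε < 1)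
    (Φ : Matrix (Fin m) (Fin N) ℝ) (hcol : ∀ j, ∑ i, Φ i j ^ 2 = 1)
    (I : Finset (Fin N)) (hI : I.card = k)
    (G : Matrix ↥I ↥I ℝ)
    (hG : G = (Φ.submatrix id (Subtype.val : ↥I → Fin N))ᵀ *
      Φ.submatrix id (Subtype.val : ↥I → Fin N))
    (hGu : IsUnit G)
    (hGinv : ∀ u : ↥I → ℝ,
      Real.sqrt (∑ i, (G⁻¹.mulVec u) i ^ 2) ≤ (1 / (1 - δ)) * Real.sqrt (∑ i, u i ^ 2))
    (hcross : ∀ i : Fin N, i ∉ I →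
      Real.sqrt (∑ l : ↥I, (∑ t, Φ t l.val * Φ t i) ^ 2) ≤
        (1 - δ) / Real.sqrt (8 * Real.log (2 * N / ε)))
    (v : (↥I → Bool) → Fin N → ℝ)
    (hv : ∀ b, v b = (Φᵀ * Φ.submatrix id (Subtype.val : ↥I → Fin N) * G⁻¹).mulVec
      (fun l => if b l then (1 : ℝ) else -1)) :
    (∀ b (l : ↥I), v b l.val = (if b l then (1 : ℝ) else -1)) ∧
    (∀ b, ∃ wvec : Fin m → ℝ, v b = Φᵀ.mulVec wvec) ∧
    ((((Finset.univ : Finset (↥I → Bool))).filter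
        (fun b => ∃ i ∉ I, 1 / 2 < |v b i|)).card : ℝ) ≤ ε * 2 ^ k := by
  set A := Φ.submatrix id (Subtype.val : ↥I → Fin N) with hA
  have hGdet : IsUnit G.det := (Matrix.isUnit_iff_isUnit_det G).mp hGu
  have hGGinv : G * G⁻¹ = 1 := Matrix.mul_nonsing_inv G hGdet
  -- Part 1
  have part1 : ∀ b (l : ↥I), v b l.val = (if b l then (1 : ℝ) else -1) := by
    intro b l
    have hrow : ∀ j : ↥I, (Φᵀ * A * G⁻¹) l.val j = (1 : Matrix ↥I ↥I ℝ) l j := by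
      intro j
      have h1 : ∀ j' : ↥I, (Φᵀ * A) l.val j' = G l j' := by
        intro j'
        rw [hG, hA]
        simp [Matrix.mul_apply]
      calc (Φᵀ * A * G⁻¹) l.val j = ∑ j', (Φᵀ * A) l.val j' * G⁻¹ j' j := Matrix.mul_apply
        _ = ∑ j', G l j' * G⁻¹ j' j := Finset.sum_congr rfl fun j' _ => by rw [h1 j']
        _ = (G * G⁻¹) l j := (Matrix.mul_apply).symm
        _ = (1 : Matrix ↥I ↥I ℝ) l j := by rw [hGGinv]
    rw [hv]
    show ∑ j, (Φᵀ * A * G⁻¹) l.val j * (if b j then (1:ℝ) else -1)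
        = (if b l then (1 : ℝ) else -1)
    rw [Finset.sum_congr rfl fun j _ => by rw [hrow j]]
    exact congrFun (Matrix.one_mulVec _) l
  refine ⟨part1, ?_, ?_⟩
  · -- Part 2
    intro b
    refine ⟨(A * G⁻¹).mulVec (fun l => if b l then (1 : ℝ) else -1), ?_⟩
    rw [hv, Matrix.mul_assoc, ← Matrix.mulVec_mulVec]
  · -- Part 3
    set L := Real.log (2 * N / ε) with hLdef
    have key : ∀ i : Fin N, i ∉ I →
        ((Finset.univ.filter (fun b : ↥I → Bool => 1/2 < |v b i|)).card : ℝ)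
          ≤ ε * 2 ^ k / N := by
      intro i hi
      have hN : 0 < N := i.pos
      have hNR : (0:ℝ) < N := by exact_mod_cast hN
      have hN1 : (1:ℝ) ≤ N := by exact_mod_cast hN
      have harg : 1 < 2 * N / ε := by
        rw [lt_div_iff₀ hε0]
        nlinarith
      have hL : 0 < L := Real.log_pos harg
      set s : ↥I → ℝ := fun l => (Φᵀ * A * G⁻¹) i l with hs
      have hveq : ∀ b : ↥I → Bool, v b i = ∑ l, s l * (if b l then (1:ℝ) else -1) := by
        intro b
        rw [hv]
        rfl
      -- s = G⁻¹.mulVec u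
      set u : ↥I → ℝ := fun l => ∑ t, Φ t l.val * Φ t i with hu
      have hGsym : G⁻¹ᵀ = G⁻¹ := by
        rw [Matrix.transpose_nonsing_inv]
        congr 1
        rw [hG, Matrix.transpose_mul, Matrix.transpose_transpose]
      have hsu : s = G⁻¹.mulVec u := by
        funext l
        show (Φᵀ * A * G⁻¹) i l = ∑ j, G⁻¹ l j * u j
        calc (Φᵀ * A * G⁻¹) i l = ∑ j, (Φᵀ * A) i j * G⁻¹ j l := Matrix.mul_apply
          _ = ∑ j, G⁻¹ l j * u j := by
            apply Finset.sum_congr rfl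
            intro j _
            have h2 : (Φᵀ * A) i j = u j := by
              rw [hA, hu]
              simp [Matrix.mul_apply, mul_comm]
            have h3 : G⁻¹ j l = G⁻¹ l j := by
              conv_lhs => rw [← hGsym]
              rfl
            rw [h2, h3, mul_comm]
      have hsqrt : Real.sqrt (∑ l, s l ^ 2) ≤ 1 / Real.sqrt (8 * L) := by
        rw [hsu]
        calc Real.sqrt (∑ l, (G⁻¹.mulVec u) l ^ 2)
            ≤ (1 / (1 - δ)) * Real.sqrt (∑ l, u l ^ 2) := hGinv u
          _ ≤ (1 / (1 - δ)) * ((1 - δ) / Real.sqrt (8 * L)) := by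
              apply mul_le_mul_of_nonneg_left (hcross i hi)
              have h1δ : (0:ℝ) < 1 - δ := by linarith
              positivity
          _ = 1 / Real.sqrt (8 * L) := by
              have h1δ : (1:ℝ) - δ ≠ 0 := by intro h; linarith [h]
              have hX : Real.sqrt (8*L) ≠ 0 := ne_of_gt (Real.sqrt_pos.mpr (by positivity))
              field_simp
      have hsum : ∑ l, s l ^ 2 ≤ 1 / (8 * L) := by
        have h8 : (0:ℝ) < 8 * L := by positivity
        have h1 : (1:ℝ) / Real.sqrt (8 * L) = Real.sqrt (1 / (8 * L)) := by
          rw [one_div, one_div, Real.sqrt_inv]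
        rw [h1] at hsqrt
        calc ∑ l, s l ^ 2 = Real.sqrt (∑ l, s l ^ 2) ^ 2 :=
              (Real.sq_sqrt (Finset.sum_nonneg fun l _ => sq_nonneg (s l))).symm
          _ ≤ Real.sqrt (1 / (8 * L)) ^ 2 := by
              apply pow_le_pow_left₀ (Real.sqrt_nonneg _) hsqrt
          _ = 1 / (8 * L) := Real.sq_sqrt (by positivity)
      have hcount := count_abs_bound s L hL hsum
      have hfe : (Finset.univ.filter (fun b : ↥I → Bool => 1/2 < |v b i|)) =
          (Finset.univ.filter (fun b : ↥I → Bool =>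
            1/2 < |∑ l, s l * (if b l then (1:ℝ) else -1)|)) := by
        apply Finset.filter_congr
        intro b _
        rw [hveq b]
      rw [hfe]
      have hcard : Fintype.card ↥I = k := by rw [Fintype.card_coe, hI]
      rw [hcard] at hcount
      have hexpL : Real.exp (-L) = ε / (2 * N) := by
        rw [Real.exp_neg, hLdef, Real.exp_log (by positivity)]
        field_simp
      rw [hexpL] at hcount
      calc _ ≤ 2 * 2 ^ k * (ε / (2 * N)) := hcount
        _ = ε * 2 ^ k / N := by field_simp
    -- union bound
    have hsub : ((Finset.univ : Finset (↥I → Bool))).filter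
        (fun b => ∃ i ∉ I, 1 / 2 < |v b i|) ⊆
        Iᶜ.biUnion (fun i => Finset.univ.filter (fun b : ↥I → Bool => 1/2 < |v b i|)) := by
      intro b hb
      obtain ⟨i, hi, hgt⟩ := (Finset.mem_filter.mp hb).2
      exact Finset.mem_biUnion.mpr ⟨i, Finset.mem_compl.mpr hi,
        Finset.mem_filter.mpr ⟨Finset.mem_univ _, hgt⟩⟩
    calc ((((Finset.univ : Finset (↥I → Bool))).filter
        (fun b => ∃ i ∉ I, 1 / 2 < |v b i|)).card : ℝ)
        ≤ ((Iᶜ.biUnion (fun i => Finset.univ.filter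
            (fun b : ↥I → Bool => 1/2 < |v b i|))).card : ℝ) := by
          exact_mod_cast Finset.card_le_card hsub
      _ ≤ ∑ i ∈ Iᶜ, ((Finset.univ.filter (fun b : ↥I → Bool => 1/2 < |v b i|)).card : ℝ) := by
          exact_mod_cast Finset.card_biUnion_le
      _ ≤ ∑ _i ∈ Iᶜ, ε * 2 ^ k / N := by
          apply Finset.sum_le_sum
          intro i hi
          exact key i (Finset.mem_compl.mp hi)
      _ = (Iᶜ.card : ℝ) * (ε * 2 ^ k / N) := by rw [Finset.sum_const, nsmul_eq_mul]
      _ ≤ ε * 2 ^ k := by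
          rcases Nat.eq_zero_or_pos N with hN0 | hNpos
          · have : Iᶜ.card = 0 := by
              have : Iᶜ.card ≤ N := by
                simpa using Finset.card_le_univ Iᶜ
              omega
            rw [this]
            simp
            positivity
          · have hNR : (0:ℝ) < N := by exact_mod_cast hNpos
            have hIc : (Iᶜ.card : ℝ) ≤ N := by
              exact_mod_cast (by simpa using Finset.card_le_univ Iᶜ : Iᶜ.card ≤ N)
            rw [div_eq_mul_inv]
            calc (Iᶜ.card : ℝ) * (ε * 2 ^ k * (N:ℝ)⁻¹)
                ≤ (N:ℝ) * (ε * 2 ^ k * (N:ℝ)⁻¹) := by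
                  apply mul_le_mul_of_nonneg_right hIc (by positivity)
              _ = ε * 2 ^ k := by field_simp
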